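/- arXiv:1405.7508 — 6 statements merged into one kernel-verified Lean document; each statement's English description precedes it below -/
import Mathlib

section
/- In the n-dimensional hypercube graph Q_n (vertices are 0-1 vectors of length n, with Hamming distance as graph distance), for any unknown vertex u, the answers to the n-1+⌈log_2(n+1)⌉ ball queries consisting of B(0, r) for ⌈log_2(n+1)⌉ adaptively chosen radii r (binary search on d(0,u)) together with B(e_i, d-1) for i = 1,...,n-1 (where d = d(0,u) and e_i is the i-th standard basis vector) determine u uniquely. In particular A(Q_n) ≤ n - 1 + ⌈log_2(n+1)⌉. -/
/-- An adaptive ball-search strategy: a binary decision tree whose internal nodes query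
"is the unknown vertex in the ball of radius `r` about `c`?". -/
inductive BallTree (V : Type*) : Type _ where
  | leaf : V → BallTree V
  | node : V → ℕ → BallTree V → BallTree V → BallTree V

/-- The output of the strategy on unknown vertex `u`, for the metric `d`. -/
def BallTree.eval {V : Type*} (d : V → V → ℕ) : BallTree V → V → V
  | .leaf v, _ => v
  | .node c r tYes tNo, u => if d c u ≤ r then tYes.eval d u else tNo.eval d u

/-- The number of queries used in the worst case (depth of the tree). -/
def BallTree.depth {V : Type*} : BallTree V → ℕ
  | .leaf _ => 0
  | .node _ _ t₁ t₂ => max t₁.depth t₂.depth + 1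

namespace HypercubeAux

variable {n : ℕ}

/-- the i-th standard basis vector -/
def eVec (n : ℕ) (i : Fin n) : Fin n → Bool := fun j => decide (j = i)

/-- Hamming weight. -/
def wt (u : Fin n → Bool) : ℕ := ∑ j, if u j then 1 else 0

lemma hamming_zero (u : Fin n → Bool) : hammingDist (fun _ => false) u = wt u := by
  rw [hammingDist, Finset.card_filter, wt]
  refine Finset.sum_congr rfl fun j _ => ?_
  cases u j <;> simp

lemma wt_le (u : Fin n → Bool) : wt u ≤ n := by
  calc wt u ≤ ∑ _j : Fin n, 1 := Finset.sum_le_sum fun j _ => by split <;> omega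
  _ = n := by simp

lemma wt_split (u : Fin n → Bool) (i : Fin n) :
    wt u = (if u i then 1 else 0) + ∑ j ∈ Finset.univ.erase i, (if u j then 1 else 0) := by
  rw [wt, ← Finset.add_sum_erase _ _ (Finset.mem_univ i)]

lemma hamming_eVec (u : Fin n → Bool) (i : Fin n) :
    hammingDist (eVec n i) u = if u i then wt u - 1 else wt u + 1 := by
  rw [hammingDist, Finset.card_filter,
    ← Finset.add_sum_erase _ _ (Finset.mem_univ i), wt_split u i]
  have h1 : ∑ j ∈ Finset.univ.erase i, (if eVec n i j ≠ u j then 1 else 0)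
      = ∑ j ∈ Finset.univ.erase i, (if u j then 1 else 0) := by
    refine Finset.sum_congr rfl fun j hj => ?_
    have : eVec n i j = false := by
      simp [eVec, (Finset.mem_erase.1 hj).1]
    rw [this]; cases u j <;> simp
  rw [h1]
  have : eVec n i i = true := by simp [eVec]
  rw [this]; cases hui : u i <;> simp <;> omega

lemma query_eVec (u : Fin n → Bool) (i : Fin n) :
    (hammingDist (eVec n i) u ≤ wt u - 1) ↔ u i = true := by
  rw [hamming_eVec]
  cases hui : u i <;> simp <;> omega

end HypercubeAux

namespace HypercubeAux

variable {m : ℕ}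

/-- Fill in the last coordinate from the known weight `d`. -/
def fixLast (d : ℕ) (acc : Fin (m + 1) → Bool) : Fin (m + 1) → Bool :=
  Function.update acc (Fin.last m)
    (decide (d ≠ ∑ j ∈ Finset.univ.erase (Fin.last m), if acc j then 1 else 0))

lemma fixLast_correct {d : ℕ} {u acc : Fin (m + 1) → Bool} (hw : wt u = d)
    (h : ∀ j, j ≠ Fin.last m → acc j = u j) : fixLast d acc = u := by
  funext j
  rcases eq_or_ne j (Fin.last m) with rfl | hj
  · have hs : (∑ j ∈ Finset.univ.erase (Fin.last m), if acc j then 1 else 0)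
        = ∑ j ∈ Finset.univ.erase (Fin.last m), if u j then 1 else 0 := by
      refine Finset.sum_congr rfl fun j hj => ?_
      rw [h j (Finset.mem_erase.1 hj).1]
    rw [fixLast, Function.update_self, hs]
    set S := ∑ j ∈ Finset.univ.erase (Fin.last m), if u j then 1 else 0 with hS
    have hsp := wt_split u (Fin.last m)
    rw [← hS] at hsp
    cases hul : u (Fin.last m) <;> rw [hul] at hsp <;> simp at hsp <;> simp <;> omega
  · rw [fixLast, Function.update_of_ne hj, h j hj]

/-- Determine coordinates in `L` with queries `B(e_i, d-1)`, then fill in the last one. -/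
def coordTree (d : ℕ) : List (Fin (m + 1)) → (Fin (m + 1) → Bool) → BallTree (Fin (m + 1) → Bool)
  | [], acc => .leaf (fixLast d acc)
  | i :: rest, acc => .node (eVec (m + 1) i) (d - 1)
      (coordTree d rest (Function.update acc i true))
      (coordTree d rest (Function.update acc i false))

lemma coordTree_depth (d : ℕ) (L : List (Fin (m + 1))) (acc : Fin (m + 1) → Bool) :
    (coordTree d L acc).depth = L.length := by
  induction L generalizing acc with
  | nil => rfl
  | cons i rest ih => simp [coordTree, BallTree.depth, ih]

lemma coordTree_eval {d : ℕ} {u : Fin (m + 1) → Bool} (hw : wt u = d) :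
    ∀ (L : List (Fin (m + 1))) (acc : Fin (m + 1) → Bool),
      (∀ j, j ≠ Fin.last m → j ∉ L → acc j = u j) →
      (coordTree d L acc).eval hammingDist u = u := by
  intro L
  induction L with
  | nil =>
    intro acc h
    exact fixLast_correct hw fun j hj => h j hj List.not_mem_nil
  | cons i rest ih =>
    intro acc h
    rw [coordTree, BallTree.eval]
    have hq : (hammingDist (eVec (m + 1) i) u ≤ d - 1) ↔ u i = true := by
      rw [← hw]; exact query_eVec u i
    by_cases hui : u i = true
    · rw [if_pos (hq.2 hui)]
      refine ih _ fun j hj hjr => ?_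
      rcases eq_or_ne j i with rfl | hji
      · rw [Function.update_self, hui]
      · rw [Function.update_of_ne hji]
        exact h j hj (by simp [hjr, hji])
    · rw [if_neg (fun hc => hui (hq.1 hc))]
      refine ih _ fun j hj hjr => ?_
      rcases eq_or_ne j i with rfl | hji
      · rw [Function.update_self]
        simp only [Bool.not_eq_true] at hui
        exact hui.symm
      · rw [Function.update_of_ne hji]
        exact h j hj (by simp [hjr, hji])

end HypercubeAux

namespace HypercubeAux

/-- Indices `0..m-1`, all but the last. -/
def initList (m : ℕ) : List (Fin (m + 1)) := (List.finRange m).map Fin.castSucc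

lemma mem_initList {m : ℕ} (j : Fin (m + 1)) (hj : j ≠ Fin.last m) : j ∈ initList m := by
  have hlt : (j : ℕ) < m := by
    rcases lt_or_eq_of_le (Nat.lt_succ_iff.1 j.isLt) with h | h
    · exact h
    · exact absurd (Fin.ext h) hj
  exact List.mem_map.2 ⟨⟨j, hlt⟩, List.mem_finRange _, Fin.ext rfl⟩

/-- Binary search for the weight over `[lo, lo + len]`, then determine the coordinates. -/
def searchTree (m : ℕ) (lo : ℕ) : ℕ → BallTree (Fin (m + 1) → Bool)
  | 0 => coordTree lo (initList m) (fun _ => false)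
  | (len + 1) => .node (fun _ => false) (lo + (len + 1) / 2)
      (searchTree m lo ((len + 1) / 2))
      (searchTree m (lo + (len + 1) / 2 + 1) (len + 1 - (len + 1) / 2 - 1))
  termination_by len => len
  decreasing_by all_goals omega

lemma searchTree_depth (m : ℕ) : ∀ len lo, (searchTree m lo len).depth ≤ Nat.clog 2 (len + 1) + m := by
  intro len
  induction len using Nat.strong_induction_on with
  | _ len ih =>
    intro lo
    match len with
    | 0 =>
      rw [searchTree, coordTree_depth]
      simp [initList, Nat.clog_of_right_le_one]
    | (len + 1) =>
      rw [searchTree]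
      have h1 := ih ((len + 1) / 2) (by omega) lo
      have h2 := ih (len + 1 - (len + 1) / 2 - 1) (by omega) (lo + (len + 1) / 2 + 1)
      have hm : Nat.clog 2 (len + 1 - (len + 1) / 2 - 1 + 1) ≤ Nat.clog 2 ((len + 1) / 2 + 1) :=
        Nat.clog_mono_right 2 (by omega)
      have hrec : Nat.clog 2 (len + 1 + 1) = Nat.clog 2 ((len + 1) / 2 + 1) + 1 := by
        rw [Nat.clog_of_two_le (by norm_num) (by omega)]
        congr 2
        omega
      simp only [BallTree.depth]
      omega

lemma searchTree_eval (m : ℕ) : ∀ len lo (u : Fin (m + 1) → Bool), lo ≤ wt u → wt u ≤ lo + len →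
    (searchTree m lo len).eval hammingDist u = u := by
  intro len
  induction len using Nat.strong_induction_on with
  | _ len ih =>
    intro lo u hlo hhi
    match len with
    | 0 =>
      rw [searchTree]
      exact coordTree_eval (by omega) _ _ fun j hj hjl => absurd (mem_initList j hj) hjl
    | (len + 1) =>
      rw [searchTree, BallTree.eval, hamming_zero]
      by_cases hle : wt u ≤ lo + (len + 1) / 2
      · rw [if_pos hle]
        exact ih _ (by omega) _ _ hlo hle
      · rw [if_neg hle]
        exact ih _ (by omega) _ _ (by omega) (by omega)

end HypercubeAux


open HypercubeAux

/-- There is an adaptive strategy of length `n - 1 + ⌈log₂(n+1)⌉` determining an unknown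
vertex of the hypercube `Q_n`: first binary-search the distance `d(0,u)` with
`⌈log₂(n+1)⌉` ball queries centered at `0`, then determine the first `n-1` coordinates
with the balls `B(e_i, d-1)`.  In particular `A(Q_n) ≤ n - 1 + ⌈log₂(n+1)⌉`. -/
theorem hypercube_adaptive_upper_bound (n : ℕ) :
    ∃ t : BallTree (Fin n → Bool),
      (∀ u : Fin n → Bool, t.eval hammingDist u = u) ∧
      t.depth ≤ n - 1 + Nat.clog 2 (n + 1) := by
  match n with
  | 0 =>
    refine ⟨.leaf (fun i => i.elim0), fun u => funext fun i => i.elim0, by simp [BallTree.depth]⟩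
  | (m + 1) =>
    refine ⟨searchTree m 0 (m + 1), fun u => searchTree_eval m (m + 1) 0 u (Nat.zero_le _)
      (by simpa using wt_le u), ?_⟩
    have := searchTree_depth m (m + 1) 0
    omega
end

section
/- A(Q_n, ≤ r) ≤ K(n,r) + n - 1 + ⌈log_2(r+1)⌉, where K(n,r) is the minimum size of a radius-r covering code of Q_n. -/
/-- All radii queried by the strategy are at most `R`. -/
def BallTree.radiusLE {V : Type*} : BallTree V → ℕ → Prop
  | .leaf _, _ => True
  | .node _ r t₁ t₂, R => r ≤ R ∧ t₁.radiusLE R ∧ t₂.radiusLE R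

/-- `K(n,r)`: the minimum number of Hamming balls of radius `r` covering `Q_n`. -/
noncomputable def coveringNumber (n r : ℕ) : ℕ :=
  sInf {t : ℕ | ∃ C : Finset (Fin n → Bool), C.card = t ∧
    ∀ v : Fin n → Bool, ∃ c ∈ C, hammingDist c v ≤ r}

namespace BallSearch

open Finset

variable {V : Type*}

lemma bool_flip_eq {a b : Bool} (h : ¬ a = b) : (!b) = a := by
  cases a <;> cases b <;> simp_all

/-! ### Phase 1: the covering chain -/

def coverTree (r : ℕ) (k : V → BallTree V) : V → List V → BallTree V
  | c, [] => k c
  | c, c' :: cs => .node c r (k c) (coverTree r k c' cs)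

lemma coverTree_radiusLE (r R : ℕ) (hr : r ≤ R) (k : V → BallTree V)
    (hk : ∀ c, (k c).radiusLE R) : ∀ c l, (coverTree r k c l).radiusLE R := by
  intro c l
  induction l generalizing c with
  | nil => exact hk c
  | cons c' cs ih => exact ⟨hr, hk c, ih c'⟩

lemma coverTree_depth (r D : ℕ) (k : V → BallTree V)
    (hk : ∀ c, (k c).depth ≤ D) : ∀ c l, (coverTree r k c l).depth ≤ l.length + D := by
  intro c l
  induction l generalizing c with
  | nil => simpa [coverTree] using hk c
  | cons c' cs ih =>
    have h1 := hk c
    have h2 := ih c'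
    simp only [coverTree, BallTree.depth, List.length_cons]
    omega

lemma coverTree_eval (d : V → V → ℕ) (r : ℕ) (k : V → BallTree V) (u : V)
    (hk : ∀ c, d c u ≤ r → (k c).eval d u = u) :
    ∀ c l, (d c u ≤ r ∨ ∃ c' ∈ l, d c' u ≤ r) → (coverTree r k c l).eval d u = u := by
  intro c l
  induction l generalizing c with
  | nil =>
    intro h
    rcases h with h | ⟨c', hc', _⟩
    · exact hk c h
    · simp at hc'
  | cons c' cs ih =>
    intro h
    simp only [coverTree, BallTree.eval]
    by_cases hc : d c u ≤ r
    · simp only [hc, if_true]; exact hk c hc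
    · simp only [hc, if_false]
      apply ih c'
      rcases h with h | ⟨c'', hc'', hd⟩
      · exact absurd h hc
      · rcases List.mem_cons.mp hc'' with rfl | hmem
        · exact Or.inl hd
        · exact Or.inr ⟨c'', hmem, hd⟩

/-! ### Phase 2: binary search for the exact distance -/

def searchTree (c : V) (k : ℕ → BallTree V) : ℕ → ℕ → BallTree V
  | 0, lo => k lo
  | f + 1, lo => .node c (lo + (f + 1) / 2)
      (searchTree c k ((f + 1) / 2) lo)
      (searchTree c k (f / 2) (lo + (f + 1) / 2 + 1))
  termination_by f lo => f
  decreasing_by all_goals omega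

lemma searchTree_radiusLE (c : V) (k : ℕ → BallTree V) (R : ℕ) :
    ∀ f lo, lo + f ≤ R → (∀ m, m ≤ lo + f → (k m).radiusLE R) →
      (searchTree c k f lo).radiusLE R := by
  intro f
  induction f using Nat.strong_induction_on with
  | _ f ih =>
    match f with
    | 0 =>
      intro lo h hk
      simp only [searchTree]
      exact hk lo (by omega)
    | f + 1 =>
      intro lo h hk
      simp only [searchTree]
      exact ⟨by omega,
        ih ((f + 1) / 2) (by omega) lo (by omega) (fun m hm => hk m (by omega)),
        ih (f / 2) (by omega) (lo + (f + 1) / 2 + 1) (by omega)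
          (fun m hm => hk m (by omega))⟩

lemma searchTree_depth (c : V) (k : ℕ → BallTree V) (D : ℕ)
    (hk : ∀ m, (k m).depth ≤ D) :
    ∀ f lo, (searchTree c k f lo).depth ≤ Nat.clog 2 (f + 1) + D := by
  intro f
  induction f using Nat.strong_induction_on with
  | _ f ih =>
    match f with
    | 0 =>
      intro lo
      simpa [searchTree, Nat.clog_one_right] using hk lo
    | f + 1 =>
      intro lo
      have h1 := ih ((f + 1) / 2) (by omega) lo
      have h2 := ih (f / 2) (by omega) (lo + (f + 1) / 2 + 1)
      have hmono : Nat.clog 2 (f / 2 + 1) ≤ Nat.clog 2 ((f + 1) / 2 + 1) :=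
        Nat.clog_mono_right 2 (by omega)
      have hclog : Nat.clog 2 (f + 1 + 1) = Nat.clog 2 ((f + 1) / 2 + 1) + 1 := by
        rw [Nat.clog_of_two_le (by norm_num) (by omega)]
        congr 2
        omega
      simp only [searchTree, BallTree.depth]
      omega

lemma searchTree_eval (c : V) (k : ℕ → BallTree V) (d : V → V → ℕ) (u : V) :
    ∀ f lo, lo ≤ d c u → d c u ≤ lo + f →
      (searchTree c k f lo).eval d u = (k (d c u)).eval d u := by
  intro f
  induction f using Nat.strong_induction_on with
  | _ f ih =>
    match f with
    | 0 =>
      intro lo h1 h2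
      have : d c u = lo := by omega
      rw [searchTree, this]
    | f + 1 =>
      intro lo h1 h2
      rw [searchTree]
      simp only [BallTree.eval]
      by_cases hc : d c u ≤ lo + (f + 1) / 2
      · simp only [hc, if_true]
        exact ih ((f + 1) / 2) (by omega) lo h1 hc
      · simp only [hc, if_false]
        exact ih (f / 2) (by omega) (lo + (f + 1) / 2 + 1) (by omega) (by omega)

/-! ### Phase 3: determining the coordinates -/

def coordTree {n : ℕ} (c : Fin n → Bool) (dm : ℕ) :
    List (Fin n) → (Fin n → Bool) → BallTree (Fin n → Bool)
  | [], w => .leaf w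
  | i :: is, w => .node (Function.update c i (!(c i))) dm
      (coordTree c dm is (Function.update w i (!(c i))))
      (coordTree c dm is (Function.update w i (c i)))

lemma coordTree_radiusLE {n : ℕ} (c : Fin n → Bool) (dm R : ℕ) (hdm : dm ≤ R) :
    ∀ is w, (coordTree c dm is w).radiusLE R := by
  intro is
  induction is with
  | nil => intro w; trivial
  | cons i is ih => intro w; exact ⟨hdm, ih _, ih _⟩

lemma coordTree_depth {n : ℕ} (c : Fin n → Bool) (dm : ℕ) :
    ∀ is w, (coordTree c dm is w).depth ≤ is.length := by
  intro is
  induction is with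
  | nil => intro w; simp [coordTree, BallTree.depth]
  | cons i is ih =>
    intro w
    have h1 := ih (Function.update w i (!(c i)))
    have h2 := ih (Function.update w i (c i))
    simp only [coordTree, BallTree.depth, List.length_cons]
    omega

lemma hammingDist_update {n : ℕ} (c u : Fin n → Bool) (i : Fin n) (b : Bool) :
    hammingDist (Function.update c i b) u
      = ((univ.erase i).filter (fun j => c j ≠ u j)).card + (if b = u i then 0 else 1) := by
  classical
  have h1 : (univ.erase i).filter (fun j => Function.update c i b j ≠ u j)
      = (univ.erase i).filter (fun j => c j ≠ u j) := by
    apply Finset.filter_congr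
    intro j hj
    rw [Function.update_of_ne (Finset.ne_of_mem_erase hj)]
  have hsplit : (univ : Finset (Fin n)) = insert i (univ.erase i) :=
    (Finset.insert_erase (Finset.mem_univ i)).symm
  show ((univ.filter fun j => Function.update c i b j ≠ u j)).card = _
  conv_lhs => rw [hsplit]
  rw [Finset.filter_insert, h1]
  by_cases hb : b = u i
  · rw [if_pos hb, if_neg (by simp [Function.update_self, hb])]
    omega
  · rw [if_neg hb, if_pos (by simp [Function.update_self, hb]),
      Finset.card_insert_of_notMem
        (fun h => (Finset.mem_erase.mp (Finset.mem_of_mem_filter _ h)).1 rfl)]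

lemma flip_dist_iff {n : ℕ} (c u : Fin n → Bool) (i : Fin n) (m : ℕ)
    (h : hammingDist c u = m + 1) :
    (hammingDist (Function.update c i (!(c i))) u ≤ m ↔ u i ≠ c i) := by
  classical
  have hc := hammingDist_update c u i (c i)
  rw [Function.update_eq_self] at hc
  have hf := hammingDist_update c u i (!(c i))
  by_cases hcu : c i = u i
  · have hb : ¬ (!(c i)) = u i := by rw [← hcu]; cases c i <;> simp
    rw [if_neg hb] at hf
    rw [if_pos hcu] at hc
    constructor
    · intro hle; exfalso; omega
    · intro hne; exact absurd hcu.symm hne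
  · have hne : u i ≠ c i := fun he => hcu he.symm
    have hb : (!(c i)) = u i := bool_flip_eq hne
    rw [if_pos hb] at hf
    rw [if_neg hcu] at hc
    exact ⟨fun _ => hne, fun _ => by omega⟩

lemma coordTree_eval {n : ℕ} (c u : Fin n → Bool) (dm : ℕ)
    (hcd : hammingDist c u = dm + 1) :
    ∀ is w, (∀ j, j ∉ is → w j = u j) →
      (coordTree c dm is w).eval hammingDist u = u := by
  intro is
  induction is with
  | nil =>
    intro w hw
    simp only [coordTree, BallTree.eval]
    funext j
    exact hw j List.not_mem_nil
  | cons i is ih =>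
    intro w hw
    simp only [coordTree, BallTree.eval]
    have hiff := flip_dist_iff c u i dm hcd
    by_cases hui : u i = c i
    · have hnot : ¬ hammingDist (Function.update c i (!(c i))) u ≤ dm := by
        rw [hiff]; simp [hui]
      rw [if_neg hnot]
      apply ih
      intro j hj
      rcases eq_or_ne j i with rfl | hji
      · rw [Function.update_self, hui]
      · rw [Function.update_of_ne hji]
        exact hw j (by simp [hji, hj])
    · have hyes : hammingDist (Function.update c i (!(c i))) u ≤ dm := by
        rw [hiff]; exact hui
      rw [if_pos hyes]
      apply ih
      intro j hj
      rcases eq_or_ne j i with rfl | hji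
      · rw [Function.update_self]
        exact bool_flip_eq hui
      · rw [Function.update_of_ne hji]
        exact hw j (by simp [hji, hj])

end BallSearch

/-- `A(Q_n, ≤ r) ≤ K(n,r) + n - 1 + ⌈log₂(r+1)⌉`: there is an adaptive strategy on `Q_n`
using balls of radius at most `r` of length `K(n,r) + n - 1 + ⌈log₂(r+1)⌉`. -/
theorem hypercube_adaptive_bounded_radius_upper_bound (n r : ℕ) :
    ∃ t : BallTree (Fin n → Bool),
      t.radiusLE r ∧
      (∀ u : Fin n → Bool, t.eval hammingDist u = u) ∧
      t.depth ≤ coveringNumber n r + n - 1 + Nat.clog 2 (r + 1) := by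
  classical
  have hne : {t : ℕ | ∃ C : Finset (Fin n → Bool), C.card = t ∧
      ∀ v : Fin n → Bool, ∃ c ∈ C, hammingDist c v ≤ r}.Nonempty :=
    ⟨(Finset.univ : Finset (Fin n → Bool)).card, Finset.univ, rfl,
      fun v => ⟨v, Finset.mem_univ v, by simp⟩⟩
  obtain ⟨C, hCcard, hCcov⟩ := Nat.sInf_mem hne
  have hK : C.card = coveringNumber n r := hCcard
  obtain ⟨c₀', hc₀'C, -⟩ := hCcov (fun _ => false)
  have hCne : C.toList ≠ [] := by
    intro h
    have hmem := Finset.mem_toList.mpr hc₀'C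
    rw [h] at hmem
    simp at hmem
  obtain ⟨c₀, cs, hl⟩ := List.exists_cons_of_ne_nil hCne
  refine ⟨BallSearch.coverTree r (fun c => BallSearch.searchTree c
      (fun m => if m = 0 then .leaf c
        else BallSearch.coordTree c (m - 1) (List.finRange n) c) r 0) c₀ cs,
    ?_, ?_, ?_⟩
  · -- all radii are at most r
    apply BallSearch.coverTree_radiusLE r r le_rfl
    intro c
    apply BallSearch.searchTree_radiusLE c _ r r 0 (by omega)
    intro m hm
    by_cases hm0 : m = 0
    · rw [if_pos hm0]; trivial
    · rw [if_neg hm0]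
      exact BallSearch.coordTree_radiusLE c (m - 1) r (by omega) _ _
  · -- the strategy identifies every vertex
    intro u
    refine BallSearch.coverTree_eval hammingDist r _ u ?_ c₀ cs ?_
    · intro c hcu
      rw [BallSearch.searchTree_eval c _ hammingDist u r 0 (Nat.zero_le _) (by omega)]
      by_cases h0 : hammingDist c u = 0
      · rw [if_pos h0]
        exact hammingDist_eq_zero.mp h0
      · rw [if_neg h0]
        exact BallSearch.coordTree_eval c u (hammingDist c u - 1) (by omega) _ _
          (fun j hj => absurd (List.mem_finRange j) hj)
    · obtain ⟨c', hc'C, hc'u⟩ := hCcov u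
      have hmem : c' ∈ c₀ :: cs := by
        rw [← hl]; exact Finset.mem_toList.mpr hc'C
      rcases List.mem_cons.mp hmem with rfl | hmem'
      · exact Or.inl hc'u
      · exact Or.inr ⟨c', hmem', hc'u⟩
  · -- depth bound
    have hdepth : ∀ c : Fin n → Bool, (BallSearch.searchTree c
        (fun m => if m = 0 then BallTree.leaf c
          else BallSearch.coordTree c (m - 1) (List.finRange n) c) r 0).depth
        ≤ Nat.clog 2 (r + 1) + n := by
      intro c
      apply BallSearch.searchTree_depth
      intro m
      by_cases hm0 : m = 0
      · rw [if_pos hm0]; exact Nat.zero_le n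
      · rw [if_neg hm0]
        simpa using BallSearch.coordTree_depth c (m - 1) (List.finRange n) c
    have hd := BallSearch.coverTree_depth r (Nat.clog 2 (r + 1) + n) _ hdepth c₀ cs
    have hlen : cs.length + 1 = coveringNumber n r := by
      have h2 : C.toList.length = C.card := Finset.length_toList C
      rw [hl] at h2
      simp only [List.length_cons] at h2
      omega
    omega
end

section
/- Let G be a connected graph on n vertices with maximum degree at most Δ. For every subset X of V(G) with |X| ≥ Δ + 2 there exists a vertex v ∈ V(G) and a natural number r such that (1/(Δ+2))|X| ≤ |B(v,r) ∩ X| ≤ ((Δ+1)/(Δ+2))|X|, where B(v,r) is the ball of radius r around v in the graph metric. -/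
/-- Balanced-ball lemma: in a connected graph `G` of maximum degree at most `Δ`, for every
vertex set `X` with `|X| ≥ Δ + 2` there are a vertex `v` and a radius `r` with
`|X|/(Δ+2) ≤ |B(v,r) ∩ X| ≤ ((Δ+1)/(Δ+2))|X|`. -/
theorem balanced_ball_lemma {V : Type*} [Fintype V] [DecidableEq V]
    (G : SimpleGraph V) [DecidableRel G.Adj] (Δ : ℕ)
    (hconn : G.Connected) (hdeg : ∀ v : V, G.degree v ≤ Δ)
    (X : Finset V) (hX : Δ + 2 ≤ X.card) :
    ∃ (v : V) (r : ℕ),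
      (X.card : ℝ) / (Δ + 2) ≤ ((X.filter (fun x => G.dist v x ≤ r)).card : ℝ) ∧
      ((X.filter (fun x => G.dist v x ≤ r)).card : ℝ) ≤
        ((Δ : ℝ) + 1) / (Δ + 2) * X.card := by
  classical
  set n := X.card with hn
  -- ball-card function
  set bc : V → ℕ → ℕ := fun v r => (X.filter (fun x => G.dist v x ≤ r)).card with hbc
  -- the predicate: ball is "big"
  set P : V → ℕ → Prop := fun v r => (Δ + 1) * n ≤ (Δ + 2) * bc v r with hP
  have hV : Nonempty V := by
    rcases Finset.card_pos.mp (by omega : 0 < X.card) with ⟨x, hx⟩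
    exact ⟨x⟩
  -- Δ ≥ 1
  have hΔ1 : 1 ≤ Δ := by
    obtain ⟨x, hx, y, hy, hxy⟩ := Finset.one_lt_card.mp (by omega : 1 < X.card)
    obtain ⟨p, hp⟩ := (hconn x y).exists_walk_length_eq_dist
    have hd : G.dist x y ≠ 0 := fun h0 => hxy (hconn.dist_eq_zero_iff.mp h0)
    cases p with
    | nil => simp at hp; simp at hd
    | cons h q =>
      have : 1 ≤ G.degree x := by
        rw [← SimpleGraph.card_neighborFinset_eq_degree]
        exact Finset.card_pos.mpr ⟨_, (SimpleGraph.mem_neighborFinset ..).mpr h⟩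
      exact le_trans this (hdeg x)
  -- for each v there is a (large) radius with P v r
  have hex : ∀ v : V, ∃ r, P v r := by
    intro v
    refine ⟨Fintype.card V, ?_⟩
    have hfull : X.filter (fun x => G.dist v x ≤ Fintype.card V) = X := by
      apply Finset.filter_true_of_mem
      intro x _
      obtain ⟨p, hp⟩ := (hconn v x).exists_walk_length_eq_dist
      calc G.dist v x ≤ p.bypass.length := SimpleGraph.dist_le _
        _ ≤ Fintype.card V := le_of_lt p.bypass_isPath.length_lt
    simp only [hbc, hfull, hP]
    nlinarith [hn ▸ hX]
  set f : V → ℕ := fun v => Nat.find (hex v) with hf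
  obtain ⟨w, -, hwmin⟩ := Finset.exists_min_image Finset.univ f ⟨Classical.arbitrary V, Finset.mem_univ _⟩
  set r := f w with hr
  have hPwr : P w r := Nat.find_spec (hex w)
  have hnot : ∀ u : V, ∀ s, s < f u → ¬ P u s := fun u s hs => Nat.find_min (hex u) hs
  -- r ≥ 1
  have hr1 : 1 ≤ r := by
    by_contra h
    have hr0 : r = 0 := by omega
    have : bc w 0 ≤ 1 := by
      have : X.filter (fun x => G.dist w x ≤ 0) ⊆ {w} := by
        intro x hx
        simp only [Finset.mem_filter, Nat.le_zero] at hx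
        simp [(hconn.dist_eq_zero_iff.mp hx.2).symm]
      simpa [hbc] using le_trans (Finset.card_le_card this) (by simp)
    have := hr0 ▸ hPwr
    simp only [hP] at this
    nlinarith [hn ▸ hX]
  -- cover: B(w,r) ∩ X ⊆ ⋃_{u ∈ S} B(u,r-1) ∩ X, S = {w} ∪ N(w)
  set S : Finset V := insert w (G.neighborFinset w) with hS
  have hcover : X.filter (fun x => G.dist w x ≤ r) ⊆
      S.biUnion (fun u => X.filter (fun x => G.dist u x ≤ r - 1)) := by
    intro x hx
    simp only [Finset.mem_filter] at hx
    rw [Finset.mem_biUnion]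
    by_cases hle : G.dist w x ≤ r - 1
    · exact ⟨w, Finset.mem_insert_self _ _, Finset.mem_filter.mpr ⟨hx.1, hle⟩⟩
    · have hdx : G.dist w x = r := by omega
      obtain ⟨p, hp⟩ := (hconn w x).exists_walk_length_eq_dist
      cases p with
      | nil => simp [hdx] at hp; simp at hdx; omega
      | cons h q =>
        refine ⟨_, Finset.mem_insert_of_mem ((SimpleGraph.mem_neighborFinset ..).mpr h),
          Finset.mem_filter.mpr ⟨hx.1, ?_⟩⟩
        have : G.dist _ x ≤ q.length := SimpleGraph.dist_le q
        simp only [SimpleGraph.Walk.length_cons, hdx] at hp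
        omega
  have hScard : S.card ≤ Δ + 1 := by
    calc S.card ≤ (G.neighborFinset w).card + 1 := Finset.card_insert_le _ _
      _ ≤ Δ + 1 := by
        have := hdeg w
        rw [← SimpleGraph.card_neighborFinset_eq_degree] at this
        omega
  have hsum : bc w r ≤ ∑ u ∈ S, bc u (r - 1) :=
    le_trans (Finset.card_le_card hcover) (Finset.card_biUnion_le)
  -- find a good u ∈ S
  have hgood : ∃ u ∈ S, n ≤ (Δ + 2) * bc u (r - 1) := by
    by_contra hcon
    push_neg at hcon
    have hne : S.Nonempty := ⟨w, Finset.mem_insert_self _ _⟩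
    have h4 : ∑ u ∈ S, (Δ + 2) * bc u (r - 1) < ∑ _u ∈ S, n :=
      Finset.sum_lt_sum_of_nonempty hne hcon
    rw [Finset.sum_const, smul_eq_mul] at h4
    have h2 : (Δ + 1) * n ≤ (Δ + 2) * bc w r := hPwr
    have h3 : (Δ + 2) * bc w r ≤ (Δ + 2) * ∑ u ∈ S, bc u (r - 1) :=
      Nat.mul_le_mul_left _ hsum
    have h5 : (Δ + 1) * n ≤ ∑ u ∈ S, (Δ + 2) * bc u (r - 1) := by
      rw [← Finset.mul_sum]; exact le_trans h2 h3
    have h6 : S.card * n ≤ (Δ + 1) * n := Nat.mul_le_mul_right _ hScard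
    exact lt_irrefl _ (lt_of_le_of_lt h5 (lt_of_lt_of_le h4 h6))
  obtain ⟨u, huS, hul⟩ := hgood
  -- upper bound on u's ball: ¬ P u (r-1)
  have huu : (Δ + 2) * bc u (r - 1) < (Δ + 1) * n := by
    have hfu : r ≤ f u := hwmin u (Finset.mem_univ u)
    have := hnot u (r - 1) (by omega)
    simp only [hP, not_le] at this
    exact this
  simp only [hbc] at hul huu
  refine ⟨u, r - 1, ?_, ?_⟩
  · rw [div_le_iff₀ (by positivity)]
    have h := (Nat.cast_le (α := ℝ)).mpr hul
    push_cast at h ⊢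
    nlinarith
  · rw [div_mul_eq_mul_div, le_div_iff₀ (by positivity)]
    have h := (Nat.cast_le (α := ℝ)).mpr huu.le
    push_cast at h ⊢
    nlinarith
end

section
/- For every connected graph G on n vertices with maximum degree at most Δ, the minimum number of adaptive ball queries needed to determine an unknown vertex satisfies A(G) ≤ log_{(Δ+3)/(Δ+2)} n + Δ + 1. Combined with the trivial lower bound A(G) ≥ log_2 n, this gives A(G) = Θ_Δ(log n). -/
/-- The set of possible outputs of a strategy. -/
def BallTree.leaves {V : Type*} [DecidableEq V] : BallTree V → Finset V
  | .leaf v => {v}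
  | .node _ _ t₁ t₂ => t₁.leaves ∪ t₂.leaves

lemma BallTree.eval_mem_leaves {V : Type*} [DecidableEq V] (d : V → V → ℕ) :
    ∀ (t : BallTree V) (u : V), t.eval d u ∈ t.leaves
  | .leaf v, u => by simp [eval, leaves]
  | .node c r t₁ t₂, u => by
    simp only [eval, leaves, Finset.mem_union]
    split
    · exact Or.inl (eval_mem_leaves d t₁ u)
    · exact Or.inr (eval_mem_leaves d t₂ u)

lemma BallTree.card_leaves_le {V : Type*} [DecidableEq V] :
    ∀ t : BallTree V, t.leaves.card ≤ 2 ^ t.depth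
  | .leaf v => by simp [leaves, depth]
  | .node c r t₁ t₂ => by
    have h1 := card_leaves_le t₁
    have h2 := card_leaves_le t₂
    have e1 : (2:ℕ) ^ t₁.depth ≤ 2 ^ (max t₁.depth t₂.depth) :=
      Nat.pow_le_pow_right (by norm_num) (le_max_left _ _)
    have e2 : (2:ℕ) ^ t₂.depth ≤ 2 ^ (max t₁.depth t₂.depth) :=
      Nat.pow_le_pow_right (by norm_num) (le_max_right _ _)
    calc (t₁.leaves ∪ t₂.leaves).card ≤ t₁.leaves.card + t₂.leaves.card :=
          Finset.card_union_le _ _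
      _ ≤ 2 ^ (max t₁.depth t₂.depth) + 2 ^ (max t₁.depth t₂.depth) := by omega
      _ = 2 ^ (max t₁.depth t₂.depth + 1) := by ring
    
section Graph

variable {V : Type*} [Fintype V] [DecidableEq V] (G : SimpleGraph V) [DecidableRel G.Adj]

/-- Ball restricted to a candidate set. -/
noncomputable def ballS (S : Finset V) (v : V) (r : ℕ) : Finset V := S.filter (fun u => G.dist v u ≤ r)

lemma exists_step (hconn : G.Connected) (v u : V) (r : ℕ) (h : G.dist v u ≤ r + 1) :
    ∃ w ∈ insert v (G.neighborFinset v), G.dist w u ≤ r := by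
  rcases Nat.lt_or_ge (G.dist v u) (r+1) with h' | h'
  · exact ⟨v, Finset.mem_insert_self _ _, by omega⟩
  · have hd : G.dist v u = r + 1 := le_antisymm h h'
    obtain ⟨p, hp⟩ := hconn.exists_walk_length_eq_dist v u
    cases p with
    | nil => simp [SimpleGraph.Walk.length] at hp; simp at hd
    | @cons _ b _ hadj q =>
      refine ⟨b, Finset.mem_insert_of_mem (by simpa using hadj), ?_⟩
      have hq := SimpleGraph.dist_le q
      simp only [SimpleGraph.Walk.length_cons] at hp
      omega

lemma shrink (hconn : G.Connected) {Δ : ℕ} (hdeg : ∀ v : V, G.degree v ≤ Δ)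
    {S : Finset V} (hS : 2 ≤ S.card) :
    ∀ r v, (Δ+1) * S.card < (Δ+2) * (ballS G S v r).card →
    ∃ w r', S.card < (Δ+2) * (ballS G S w r').card ∧
      (Δ+2) * (ballS G S w r').card ≤ (Δ+1) * S.card := by
  intro r
  induction r with
  | zero =>
    intro v h
    exfalso
    have hb1 : (ballS G S v 0).card ≤ 1 := by
      apply Finset.card_le_one.mpr
      intro a ha b hb
      simp only [ballS, Finset.mem_filter, Nat.le_zero] at ha hb
      have ha' := (hconn.dist_eq_zero_iff).mp ha.2
      have hb' := (hconn.dist_eq_zero_iff).mp hb.2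
      rw [← ha', ← hb']
    have h1 : (Δ+1) * 2 ≤ (Δ+1) * S.card := Nat.mul_le_mul_left _ hS
    have h2 : (Δ+2) * (ballS G S v 0).card ≤ (Δ+2) * 1 := Nat.mul_le_mul_left _ hb1
    omega
  | succ r ih =>
    intro v h
    set N := insert v (G.neighborFinset v) with hN
    have hNcard : N.card ≤ Δ + 1 := by
      rw [hN]
      have h1 := Finset.card_insert_le v (G.neighborFinset v)
      have h2 := hdeg v
      rw [SimpleGraph.card_neighborFinset_eq_degree] at h1
      omega
    have hsub : ballS G S v (r+1) ⊆ N.biUnion (fun w => ballS G S w r) := by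
      intro u hu
      simp only [ballS, Finset.mem_filter] at hu
      obtain ⟨w, hw, hwd⟩ := exists_step G hconn v u r hu.2
      simp only [Finset.mem_biUnion]
      exact ⟨w, hw, by simp only [ballS, Finset.mem_filter]; exact ⟨hu.1, hwd⟩⟩
    obtain ⟨w, hwN, hwmax⟩ := Finset.exists_max_image N (fun w => (ballS G S w r).card)
      ⟨v, Finset.mem_insert_self _ _⟩
    have hcard : (ballS G S v (r+1)).card ≤ (Δ+1) * (ballS G S w r).card := by
      calc (ballS G S v (r+1)).card ≤ (N.biUnion (fun w => ballS G S w r)).card :=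
            Finset.card_le_card hsub
        _ ≤ ∑ x ∈ N, (ballS G S x r).card := Finset.card_biUnion_le
        _ ≤ N.card • (ballS G S w r).card :=
            Finset.sum_le_card_nsmul N _ _ (fun x hx => hwmax x hx)
        _ = N.card * (ballS G S w r).card := by rw [smul_eq_mul]
        _ ≤ (Δ+1) * (ballS G S w r).card := Nat.mul_le_mul_right _ hNcard
    have hbig : S.card < (Δ+2) * (ballS G S w r).card := by
      by_contra hcon
      push_neg at hcon
      have h1 : (Δ+2) * (ballS G S v (r+1)).card ≤
          (Δ+2) * ((Δ+1) * (ballS G S w r).card) := Nat.mul_le_mul_left _ hcard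
      have h2 : (Δ+2) * ((Δ+1) * (ballS G S w r).card) =
          (Δ+1) * ((Δ+2) * (ballS G S w r).card) := by ring
      have h3 : (Δ+1) * ((Δ+2) * (ballS G S w r).card) ≤ (Δ+1) * S.card :=
        Nat.mul_le_mul_left _ hcon
      omega
    rcases le_or_gt ((Δ+2) * (ballS G S w r).card) ((Δ+1) * S.card) with hle | hgt
    · exact ⟨w, r, hbig, hle⟩
    · exact ih w hgt

lemma balanced (hconn : G.Connected) {Δ : ℕ} (hdeg : ∀ v : V, G.degree v ≤ Δ)
    {S : Finset V} (hS : 2 ≤ S.card) :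
    ∃ v r, S.card < (Δ+2) * (ballS G S v r).card ∧
      (Δ+2) * (ballS G S v r).card ≤ (Δ+1) * S.card := by
  obtain ⟨v, hv⟩ := Finset.card_pos.mp (by omega : 0 < S.card)
  have hfull : ballS G S v (Fintype.card V) = S := by
    apply Finset.filter_eq_self.mpr
    intro u _
    obtain ⟨p⟩ := hconn v u
    have h1 := SimpleGraph.dist_le (p.toPath : G.Walk v u)
    have h2 := p.toPath.2.length_lt
    omega
  apply shrink G hconn hdeg hS (Fintype.card V) v
  rw [hfull]
  have e : (Δ+2) * S.card = (Δ+1) * S.card + S.card := by ring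
  omega

lemma chainTree (hconn : G.Connected) :
    ∀ n : ℕ, ∀ S : Finset V, S.card ≤ n → ∃ t : BallTree V,
      (∀ u ∈ S, t.eval G.dist u = u) ∧ t.depth + 1 ≤ max S.card 1 := by
  haveI : Nonempty V := hconn.nonempty
  intro n
  induction n with
  | zero =>
    intro S hS
    exact ⟨.leaf (Classical.arbitrary V), fun u hu => by
      rw [Finset.card_eq_zero.mp (Nat.le_zero.mp hS)] at hu; exact absurd hu (Finset.notMem_empty u),
      by simp [BallTree.depth]⟩
  | succ n ih =>
    intro S hS
    by_cases h1 : S.card ≤ 1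
    · rcases Finset.card_le_one_iff_subset_singleton.mp h1 with ⟨x, hx⟩
      refine ⟨.leaf x, fun u hu => ?_, by simp [BallTree.depth]⟩
      have := hx hu
      simp only [Finset.mem_singleton] at this
      simp [BallTree.eval, this]
    · push_neg at h1
      obtain ⟨x, hx⟩ := Finset.card_pos.mp (by omega : 0 < S.card)
      have hcer : (S.erase x).card = S.card - 1 := Finset.card_erase_of_mem hx
      obtain ⟨t, ht, hd⟩ := ih (S.erase x) (by omega)
      refine ⟨.node x 0 (.leaf x) t, fun u hu => ?_, ?_⟩
      · simp only [BallTree.eval]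
        split
        next h =>
          have : x = u := (hconn.dist_eq_zero_iff).mp (Nat.le_zero.mp h)
          simp [this]
        next h =>
          apply ht
          apply Finset.mem_erase.mpr
          refine ⟨fun hxu => h ?_, hu⟩
          rw [← hxu]
          simp [hconn.dist_eq_zero_iff.mpr rfl]
      · simp only [BallTree.depth]
        omega

lemma buildTree (hconn : G.Connected) {Δ : ℕ} (hdeg : ∀ v : V, G.degree v ≤ Δ) :
    ∀ m : ℕ, ∀ S : Finset V, S.card * (Δ+2)^m ≤ (Δ+3)^m * (Δ+2) →
    ∃ t : BallTree V, (∀ u ∈ S, t.eval G.dist u = u) ∧ t.depth ≤ m + Δ + 1 := by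
  intro m
  induction m with
  | zero =>
    intro S hS
    simp only [pow_zero, mul_one, one_mul] at hS
    obtain ⟨t, ht, hd⟩ := chainTree G hconn S.card S le_rfl
    exact ⟨t, ht, by omega⟩
  | succ m ih =>
    intro S hS
    by_cases hsmall : S.card ≤ Δ + 2
    · obtain ⟨t, ht, hd⟩ := chainTree G hconn S.card S le_rfl
      exact ⟨t, ht, by omega⟩
    · have hS2 : 2 ≤ S.card := by omega
      obtain ⟨v, r, hlo, hhi⟩ := balanced G hconn hdeg hS2
      set S₂ := S.filter (fun u => ¬ G.dist v u ≤ r) with hS₂def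
      have hab : (ballS G S v r).card + S₂.card = S.card :=
        Finset.card_filter_add_card_filter_not _
      have haS : (ballS G S v r).card ≤ S.card := Finset.card_filter_le _ _
      have ha3 : (Δ+3) * (ballS G S v r).card ≤ (Δ+2) * S.card := by
        calc (Δ+3) * (ballS G S v r).card
            = (Δ+2) * (ballS G S v r).card + (ballS G S v r).card := by ring
          _ ≤ (Δ+1) * S.card + S.card := Nat.add_le_add hhi haS
          _ = (Δ+2) * S.card := by ring
      have hb3 : (Δ+3) * S₂.card ≤ (Δ+2) * S.card := by
        have e : (Δ+2) * (ballS G S v r).card + (Δ+2) * S₂.card = (Δ+2) * S.card := by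
          rw [← Nat.mul_add, hab]
        have e2 : (Δ+3) * S₂.card = (Δ+2) * S₂.card + S₂.card := by ring
        omega
      have hprop : ∀ c : ℕ, (Δ+3) * c ≤ (Δ+2) * S.card →
          c * (Δ+2)^m ≤ (Δ+3)^m * (Δ+2) := by
        intro c hc
        have key : (Δ+3) * (c * (Δ+2)^m) ≤ (Δ+3) * ((Δ+3)^m * (Δ+2)) := by
          calc (Δ+3) * (c * (Δ+2)^m) = ((Δ+3) * c) * (Δ+2)^m := by ring
            _ ≤ ((Δ+2) * S.card) * (Δ+2)^m := Nat.mul_le_mul_right _ hc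
            _ = S.card * (Δ+2)^(m+1) := by ring
            _ ≤ (Δ+3)^(m+1) * (Δ+2) := hS
            _ = (Δ+3) * ((Δ+3)^m * (Δ+2)) := by ring
        exact Nat.le_of_mul_le_mul_left key (by omega)
      obtain ⟨t₁, ht₁, hd₁⟩ := ih (ballS G S v r) (hprop _ ha3)
      obtain ⟨t₂, ht₂, hd₂⟩ := ih S₂ (hprop _ hb3)
      refine ⟨.node v r t₁ t₂, fun u hu => ?_, ?_⟩
      · simp only [BallTree.eval]
        split
        next h =>
          exact ht₁ u (by simp only [ballS, Finset.mem_filter]; exact ⟨hu, h⟩)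
        next h =>
          exact ht₂ u (by simp only [hS₂def, Finset.mem_filter]; exact ⟨hu, h⟩)
      · simp only [BallTree.depth]
        omega

end Graph

/-- For a connected graph `G` on `n` vertices with maximum degree at most `Δ`,
`log₂ n ≤ A(G) ≤ log_{(Δ+3)/(Δ+2)} n + Δ + 1`; in particular `A(G) = Θ_Δ(log n)`. -/
theorem adaptive_search_bounded_degree {V : Type*} [Fintype V] [DecidableEq V]
    (G : SimpleGraph V) [DecidableRel G.Adj] (Δ : ℕ)
    (hconn : G.Connected) (hdeg : ∀ v : V, G.degree v ≤ Δ) :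
    (∃ t : BallTree V, (∀ u : V, t.eval G.dist u = u) ∧
      (t.depth : ℝ) ≤
        Real.logb ((Δ + 3 : ℝ) / (Δ + 2)) (Fintype.card V) + Δ + 1) ∧
    (∀ t : BallTree V, (∀ u : V, t.eval G.dist u = u) →
      Real.logb 2 (Fintype.card V) ≤ (t.depth : ℝ)) := by
  have hne : Nonempty V := hconn.nonempty
  have hn1 : 1 ≤ Fintype.card V := Fintype.card_pos
  set n : ℕ := Fintype.card V with hn
  set q : ℝ := ((Δ:ℝ) + 3) / ((Δ:ℝ) + 2) with hqdef
  have hd2 : (0:ℝ) < (Δ:ℝ) + 2 := by positivity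
  have hq1 : 1 < q := by
    rw [hqdef, lt_div_iff₀ hd2]
    linarith
  have hq0 : 0 < q := by linarith
  constructor
  · -- upper bound
    set x : ℝ := Real.logb q ((n:ℝ) / ((Δ:ℝ) + 2)) with hxdef
    set m : ℕ := ⌈x⌉₊ with hmdef
    have hfeas : (n:ℝ) ≤ ((Δ:ℝ) + 2) * q ^ m := by
      rcases le_or_gt ((n:ℝ) / ((Δ:ℝ) + 2)) 1 with hc | hc
      · have h1 : (n:ℝ) ≤ (Δ:ℝ) + 2 := by
          rw [div_le_one hd2] at hc; exact hc
        have h2 : (1:ℝ) ≤ q ^ m := one_le_pow₀ hq1.le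
        calc (n:ℝ) ≤ ((Δ:ℝ) + 2) * 1 := by linarith
          _ ≤ ((Δ:ℝ) + 2) * q ^ m := by nlinarith
      · have hpos : 0 < (n:ℝ) / ((Δ:ℝ) + 2) := by positivity
        have hx : x ≤ (m:ℝ) := Nat.le_ceil x
        have heq : q ^ x = (n:ℝ) / ((Δ:ℝ) + 2) :=
          Real.rpow_logb hq0 (ne_of_gt hq1) hpos
        have hle : q ^ x ≤ q ^ (m:ℝ) := by
          rw [Real.rpow_le_rpow_left_iff hq1]; exact hx
        rw [Real.rpow_natCast] at hle
        rw [heq] at hle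
        rw [div_le_iff₀ hd2] at hle
        linarith [hle]
    have hnat : n * (Δ+2)^m ≤ (Δ+3)^m * (Δ+2) := by
      have hcast : ((n * (Δ+2)^m : ℕ) : ℝ) ≤ (((Δ+3)^m * (Δ+2) : ℕ) : ℝ) := by
        push_cast
        have hqpow : q ^ m * ((Δ:ℝ)+2) ^ m = ((Δ:ℝ)+3) ^ m := by
          rw [← mul_pow]
          congr 1
          rw [hqdef, div_mul_cancel₀ _ hd2.ne']
        calc (n:ℝ) * ((Δ:ℝ)+2) ^ m ≤ (((Δ:ℝ)+2) * q ^ m) * ((Δ:ℝ)+2) ^ m :=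
              mul_le_mul_of_nonneg_right hfeas (by positivity)
          _ = (q ^ m * ((Δ:ℝ)+2) ^ m) * ((Δ:ℝ)+2) := by ring
          _ = ((Δ:ℝ)+3) ^ m * ((Δ:ℝ)+2) := by rw [hqpow]
      exact_mod_cast hcast
    obtain ⟨t, ht, hd⟩ := buildTree G hconn hdeg m Finset.univ (by simpa using hnat)
    have hmle : (m:ℝ) ≤ Real.logb q n := by
      have hlogn : 0 ≤ Real.logb q n :=
        Real.logb_nonneg hq1 (by exact_mod_cast hn1)
      rcases le_or_gt x 0 with hx0 | hx0
      · have : m = 0 := Nat.ceil_eq_zero.mpr hx0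
        rw [this]
        simpa using hlogn
      · have h1 : (m:ℝ) < x + 1 := Nat.ceil_lt_add_one hx0.le
        have h2 : x = Real.logb q n - Real.logb q ((Δ:ℝ)+2) := by
          rw [hxdef, Real.logb_div (by positivity) (ne_of_gt hd2)]
        have h3 : 1 ≤ Real.logb q ((Δ:ℝ)+2) := by
          rw [Real.le_logb_iff_rpow_le hq1 hd2, Real.rpow_one, hqdef, div_le_iff₀ hd2]
          nlinarith
        linarith
    refine ⟨t, fun u => ht u (Finset.mem_univ u), ?_⟩
    have : (t.depth : ℝ) ≤ (m:ℝ) + Δ + 1 := by exact_mod_cast hd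
    linarith
  · -- lower bound
    intro t ht
    have hsub : (Finset.univ : Finset V) ⊆ t.leaves := by
      intro u _
      have := BallTree.eval_mem_leaves G.dist t u
      rwa [ht u] at this
    have hcard : n ≤ 2 ^ t.depth := by
      calc n = (Finset.univ : Finset V).card := (Finset.card_univ).symm
        _ ≤ t.leaves.card := Finset.card_le_card hsub
        _ ≤ 2 ^ t.depth := BallTree.card_leaves_le t
    have hcast : (n:ℝ) ≤ (2:ℝ) ^ t.depth := by exact_mod_cast hcard
    calc Real.logb 2 n ≤ Real.logb 2 ((2:ℝ) ^ t.depth) :=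
          Real.logb_le_logb_of_le one_lt_two
            (by exact_mod_cast Nat.succ_le_iff.mp hn1) hcast
      _ = t.depth := by
          rw [Real.logb_pow, Real.logb_self_eq_one (by norm_num)]
          ring
end

section
/- For any connected graph G, the metric dimension β(G) satisfies β(G) ≤ M(G) ≤ diam(G) · β(G), where M(G) is the minimum size of a family of balls in G separating all pairs of vertices. -/
/-- For a finite connected graph `G`, the metric dimension `β(G)` and the minimum size
`M(G)` of a separating family of balls satisfy `β(G) ≤ M(G) ≤ diam(G) · β(G)`. -/
theorem metric_dimension_vs_ball_separation {V : Type*} [Fintype V] [DecidableEq V]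
    (G : SimpleGraph V) (hconn : G.Connected) :
    sInf {k : ℕ | ∃ D : Finset V, D.card = k ∧
        ∀ x y : V, x ≠ y → ∃ z ∈ D, G.dist x z ≠ G.dist y z} ≤
      sInf {t : ℕ | ∃ Q : Finset (V × ℕ), Q.card = t ∧
        ∀ x y : V, x ≠ y → ∃ p ∈ Q, (G.dist p.1 x ≤ p.2 ↔ ¬ G.dist p.1 y ≤ p.2)} ∧
    sInf {t : ℕ | ∃ Q : Finset (V × ℕ), Q.card = t ∧
        ∀ x y : V, x ≠ y → ∃ p ∈ Q, (G.dist p.1 x ≤ p.2 ↔ ¬ G.dist p.1 y ≤ p.2)} ≤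
      (Finset.univ.sup fun p : V × V => G.dist p.1 p.2) *
        sInf {k : ℕ | ∃ D : Finset V, D.card = k ∧
          ∀ x y : V, x ≠ y → ∃ z ∈ D, G.dist x z ≠ G.dist y z} := by
  classical
  set dm := (Finset.univ.sup fun p : V × V => G.dist p.1 p.2) with hdm
  set S := {k : ℕ | ∃ D : Finset V, D.card = k ∧
      ∀ x y : V, x ≠ y → ∃ z ∈ D, G.dist x z ≠ G.dist y z} with hS
  set T := {t : ℕ | ∃ Q : Finset (V × ℕ), Q.card = t ∧
      ∀ x y : V, x ≠ y → ∃ p ∈ Q, (G.dist p.1 x ≤ p.2 ↔ ¬ G.dist p.1 y ≤ p.2)} with hT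
  -- key construction: from a resolving set build a separating family of balls
  have key : ∀ D : Finset V, (∀ x y : V, x ≠ y → ∃ z ∈ D, G.dist x z ≠ G.dist y z) →
      ∃ Q : Finset (V × ℕ), Q.card = D.card * dm ∧
        ∀ x y : V, x ≠ y → ∃ p ∈ Q, (G.dist p.1 x ≤ p.2 ↔ ¬ G.dist p.1 y ≤ p.2) := by
    intro D hD
    refine ⟨D ×ˢ Finset.range dm, by simp, ?_⟩
    intro x y hxy
    obtain ⟨z, hz, hne⟩ := hD x y hxy
    have hxd : G.dist x z ≤ dm :=
      Finset.le_sup (f := fun p : V × V => G.dist p.1 p.2) (Finset.mem_univ (x, z))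
    have hyd : G.dist y z ≤ dm :=
      Finset.le_sup (f := fun p : V × V => G.dist p.1 p.2) (Finset.mem_univ (y, z))
    rcases lt_or_gt_of_ne hne with h | h
    · refine ⟨(z, G.dist x z), ?_, ?_⟩
      · simp only [Finset.mem_product, Finset.mem_range]
        exact ⟨hz, lt_of_lt_of_le h hyd⟩
      · rw [show G.dist z x = G.dist x z from G.dist_comm,
           show G.dist z y = G.dist y z from G.dist_comm]
        omega
    · refine ⟨(z, G.dist y z), ?_, ?_⟩
      · simp only [Finset.mem_product, Finset.mem_range]
        exact ⟨hz, lt_of_lt_of_le h hxd⟩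
      · rw [show G.dist z x = G.dist x z from G.dist_comm,
           show G.dist z y = G.dist y z from G.dist_comm]
        omega
  -- the universal set resolves
  have huniv : ∀ x y : V, x ≠ y → ∃ z ∈ (Finset.univ : Finset V), G.dist x z ≠ G.dist y z := by
    intro x y hxy
    refine ⟨x, Finset.mem_univ x, ?_⟩
    rw [SimpleGraph.dist_self]
    intro h
    rcases (G.dist_eq_zero_iff_eq_or_not_reachable).mp h.symm with h1 | h2
    · exact hxy h1.symm
    · exact h2 (hconn.preconnected y x)
  have hSne : S.Nonempty := ⟨(Finset.univ : Finset V).card, Finset.univ, rfl, huniv⟩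
  obtain ⟨Qu, hQuc, hQusep⟩ := key Finset.univ huniv
  have hTne : T.Nonempty := ⟨Qu.card, Qu, rfl, hQusep⟩
  constructor
  · -- β ≤ M : centers of a minimal separating family resolve
    obtain ⟨Q, hQc, hQsep⟩ := Nat.sInf_mem hTne
    have hres : ∀ x y : V, x ≠ y →
        ∃ z ∈ Q.image Prod.fst, G.dist x z ≠ G.dist y z := by
      intro x y hxy
      obtain ⟨p, hp, hiff⟩ := hQsep x y hxy
      refine ⟨p.1, Finset.mem_image_of_mem _ hp, ?_⟩
      intro h
      rw [show G.dist x p.1 = G.dist p.1 x from G.dist_comm,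
        show G.dist y p.1 = G.dist p.1 y from G.dist_comm] at h
      rw [h] at hiff
      exact iff_not_self hiff
    have : (Q.image Prod.fst).card ∈ S := ⟨Q.image Prod.fst, rfl, hres⟩
    calc sInf S ≤ (Q.image Prod.fst).card := Nat.sInf_le this
      _ ≤ Q.card := Finset.card_image_le
      _ = sInf T := hQc
  · -- M ≤ diam · β
    obtain ⟨D, hDc, hDres⟩ := Nat.sInf_mem hSne
    obtain ⟨Q, hQc, hQsep⟩ := key D hDres
    have : Q.card ∈ T := ⟨Q, rfl, hQsep⟩
    calc sInf T ≤ Q.card := Nat.sInf_le this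
      _ = dm * sInf S := by rw [hQc, hDc, Nat.mul_comm]
end

section
/- (Katona's separating system bound) Let X be a set of M elements and let A be a separating family of subsets of X such that every A ∈ A has |A| ≤ m, where m < M/2. Then |A| ≥ (M/m) · log_2(M) / log_2(eM/m). -/
open Finset

/-- Entropy-like function: `entE a M = a·log(M/a) + (M-a)·log(M/(M-a))`. -/
noncomputable def entE (a M : ℝ) : ℝ :=
  a * Real.log (M / a) + (M - a) * Real.log (M / (M - a))

/-- Two-term log-sum inequality. -/
lemma logsum {x u y v : ℝ} (hx : 0 ≤ x) (hxu : x ≤ u) (hy : 0 ≤ y) (hyv : y ≤ v) :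
    x * Real.log (u / x) + y * Real.log (v / y) ≤ (x + y) * Real.log ((u + v) / (x + y)) := by
  rcases eq_or_lt_of_le (add_nonneg hx hy) with h0 | hpos
  · have hx0 : x = 0 := by linarith
    have hy0 : y = 0 := by linarith
    simp [hx0, hy0]
  have huv : 0 < u + v := lt_of_lt_of_le hpos (by linarith)
  set c : ℝ := (u + v) / (x + y) with hc
  have hcpos : 0 < c := div_pos huv hpos
  have key : ∀ a b : ℝ, 0 ≤ a → a ≤ b →
      a * Real.log (b / a) ≤ a * Real.log c + (b / c - a) := by
    intro a b ha hab
    rcases eq_or_lt_of_le ha with h0 | hapos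
    · rw [← h0]
      simp
      exact div_nonneg (le_trans ha hab) hcpos.le
    · have hb : 0 < b := lt_of_lt_of_le hapos hab
      have h2 : Real.log (b / (a * c)) ≤ b / (a * c) - 1 :=
        Real.log_le_sub_one_of_pos (by positivity)
      have h1 : Real.log (b / a) = Real.log (b / (a * c)) + Real.log c := by
        rw [Real.log_div hb.ne' hapos.ne', Real.log_div hb.ne' (by positivity),
          Real.log_mul hapos.ne' hcpos.ne']
        ring
      have h3 : a * Real.log (b / (a * c)) ≤ b / c - a := by
        calc a * Real.log (b / (a * c)) ≤ a * (b / (a * c) - 1) :=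
              mul_le_mul_of_nonneg_left h2 ha
          _ = b / c - a := by field_simp
      calc a * Real.log (b / a) = a * Real.log (b / (a * c)) + a * Real.log c := by
            rw [h1]; ring
        _ ≤ (b / c - a) + a * Real.log c := by linarith
        _ = a * Real.log c + (b / c - a) := by ring
  have k1 := key x u hx hxu
  have k2 := key y v hy hyv
  have hsum : u / c + v / c = x + y := by
    rw [← add_div, hc]
    field_simp
  linarith

lemma entE_superadd {a M b N : ℝ} (ha : 0 ≤ a) (haM : a ≤ M) (hb : 0 ≤ b) (hbN : b ≤ N) :
    entE a M + entE b N ≤ entE (a + b) (M + N) := by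
  have k1 := logsum ha haM hb hbN
  have k2 := logsum (sub_nonneg.2 haM) (by linarith : M - a ≤ M)
    (sub_nonneg.2 hbN) (by linarith : N - b ≤ N)
  have h : M - a + (N - b) = M + N - (a + b) := by ring
  rw [h] at k2
  unfold entE
  linarith

lemma entE_split {s₁ s₂ : ℝ} (h1 : 0 ≤ s₁) (h2 : 0 ≤ s₂) :
    (s₁ + s₂) * Real.log (s₁ + s₂) =
      s₁ * Real.log s₁ + s₂ * Real.log s₂ + entE s₁ (s₁ + s₂) := by
  unfold entE
  have h : s₁ + s₂ - s₁ = s₂ := by ring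
  rw [h]
  rcases eq_or_lt_of_le h1 with e1 | p1
  · rcases eq_or_lt_of_le h2 with e2 | p2
    · simp [← e1, ← e2]
    · rw [← e1]
      simp [div_self p2.ne']
  · rcases eq_or_lt_of_le h2 with e2 | p2
    · rw [← e2]
      simp [div_self p1.ne']
    · have hs : (0:ℝ) < s₁ + s₂ := by linarith
      rw [Real.log_div hs.ne' p1.ne', Real.log_div hs.ne' p2.ne']
      ring

lemma katona_main {α : Type*} [DecidableEq α] (A : Finset (Finset α)) :
    ∀ S : Finset α, (∀ x ∈ S, ∀ y ∈ S, x ≠ y → ∃ B ∈ A, (x ∈ B ↔ y ∉ B)) →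
    (S.card : ℝ) * Real.log S.card ≤ ∑ B ∈ A, entE ((B ∩ S).card) S.card := by
  induction A using Finset.induction_on with
  | empty =>
    intro S hS
    have hcard : S.card ≤ 1 := by
      apply Finset.card_le_one.2
      intro a ha b hb
      by_contra hne
      obtain ⟨B, hB, _⟩ := hS a ha b hb hne
      exact absurd hB (Finset.notMem_empty B)
    rcases Nat.le_one_iff_eq_zero_or_eq_one.1 hcard with h | h <;> simp [h]
  | @insert B A' hB ih =>
    intro S hS
    set S₁ := S ∩ B with hS₁
    set S₂ := S \ B with hS₂
    have hcard : S₁.card + S₂.card = S.card := Finset.card_inter_add_card_sdiff S B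
    have sep1 : ∀ x ∈ S₁, ∀ y ∈ S₁, x ≠ y → ∃ C ∈ A', (x ∈ C ↔ y ∉ C) := by
      intro x hx y hy hne
      obtain ⟨C, hC, hiff⟩ := hS x (Finset.mem_inter.1 hx).1 y (Finset.mem_inter.1 hy).1 hne
      rcases Finset.mem_insert.1 hC with rfl | hC'
      · exact absurd (Finset.mem_inter.1 hy).2 (hiff.1 (Finset.mem_inter.1 hx).2)
      · exact ⟨C, hC', hiff⟩
    have sep2 : ∀ x ∈ S₂, ∀ y ∈ S₂, x ≠ y → ∃ C ∈ A', (x ∈ C ↔ y ∉ C) := by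
      intro x hx y hy hne
      obtain ⟨C, hC, hiff⟩ := hS x (Finset.mem_sdiff.1 hx).1 y (Finset.mem_sdiff.1 hy).1 hne
      rcases Finset.mem_insert.1 hC with rfl | hC'
      · exact absurd (hiff.2 (Finset.mem_sdiff.1 hy).2) (Finset.mem_sdiff.1 hx).2
      · exact ⟨C, hC', hiff⟩
    have h1 := ih S₁ sep1
    have h2 := ih S₂ sep2
    have hterm : ∀ C ∈ A',
        entE ((C ∩ S₁).card) S₁.card + entE ((C ∩ S₂).card) S₂.card ≤
          entE ((C ∩ S).card) S.card := by
      intro C _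
      have e1 : C ∩ S₁ = (C ∩ S) ∩ B := by
        ext a; simp only [hS₁, Finset.mem_inter]; tauto
      have e2 : C ∩ S₂ = (C ∩ S) \ B := by
        ext a; simp only [hS₂, Finset.mem_inter, Finset.mem_sdiff]; tauto
      have hc : (C ∩ S₁).card + (C ∩ S₂).card = (C ∩ S).card := by
        rw [e1, e2, Finset.card_inter_add_card_sdiff]
      have hle1 : ((C ∩ S₁).card : ℝ) ≤ S₁.card := by
        exact_mod_cast Finset.card_le_card (Finset.inter_subset_right)
      have hle2 : ((C ∩ S₂).card : ℝ) ≤ S₂.card := by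
        exact_mod_cast Finset.card_le_card (Finset.inter_subset_right)
      have := entE_superadd (a := ((C ∩ S₁).card : ℝ)) (M := (S₁.card : ℝ))
        (b := ((C ∩ S₂).card : ℝ)) (N := (S₂.card : ℝ))
        (by positivity) hle1 (by positivity) hle2
      rw [show ((C ∩ S₁).card : ℝ) + ((C ∩ S₂).card : ℝ) = ((C ∩ S).card : ℝ) by
          exact_mod_cast congrArg Nat.cast hc,
        show ((S₁.card : ℝ) + (S₂.card : ℝ)) = (S.card : ℝ) by exact_mod_cast hcard] at this
      exact this
    have hsplit : (S.card : ℝ) * Real.log S.card =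
        (S₁.card : ℝ) * Real.log S₁.card + (S₂.card : ℝ) * Real.log S₂.card +
          entE (S₁.card) S.card := by
      have := entE_split (s₁ := (S₁.card : ℝ)) (s₂ := (S₂.card : ℝ))
        (by positivity) (by positivity)
      rw [show ((S₁.card : ℝ) + (S₂.card : ℝ)) = (S.card : ℝ) by exact_mod_cast hcard] at this
      exact this
    have hBS : (S₁.card : ℝ) = ((B ∩ S).card : ℝ) := by
      rw [hS₁, Finset.inter_comm]
    calc (S.card : ℝ) * Real.log S.card
        = (S₁.card : ℝ) * Real.log S₁.card + (S₂.card : ℝ) * Real.log S₂.card +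
          entE ((B ∩ S).card) S.card := by rw [hsplit, hBS]
      _ ≤ (∑ C ∈ A', entE ((C ∩ S₁).card) S₁.card) +
          (∑ C ∈ A', entE ((C ∩ S₂).card) S₂.card) + entE ((B ∩ S).card) S.card := by
            linarith
      _ = (∑ C ∈ A', (entE ((C ∩ S₁).card) S₁.card + entE ((C ∩ S₂).card) S₂.card)) +
          entE ((B ∩ S).card) S.card := by rw [Finset.sum_add_distrib]
      _ ≤ (∑ C ∈ A', entE ((C ∩ S).card) S.card) + entE ((B ∩ S).card) S.card := by
            gcongr with C hC
            exact hterm C hC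
      _ = ∑ C ∈ insert B A', entE ((C ∩ S).card) S.card := by
            rw [Finset.sum_insert hB]; ring

/-- Katona's separating system bound: if `A` is a separating family of subsets of an
`M`-element set all of whose members have size at most `m < M/2`, then
`|A| ≥ (M/m) · log₂ M / log₂ (eM/m)`. -/
theorem katona_separating_bound {α : Type*} [Fintype α] [DecidableEq α]
    (m : ℕ) (A : Finset (Finset α))
    (hsep : ∀ x y : α, x ≠ y → ∃ B ∈ A, (x ∈ B ↔ y ∉ B))
    (hsize : ∀ B ∈ A, B.card ≤ m)
    (hm : (m : ℝ) < (Fintype.card α : ℝ) / 2) :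
    ((Fintype.card α : ℝ) / m) * Real.logb 2 (Fintype.card α) /
        Real.logb 2 (Real.exp 1 * (Fintype.card α) / m) ≤ (A.card : ℝ) := by
  set M : ℝ := (Fintype.card α : ℝ) with hM
  by_cases hm0 : (m : ℝ) = 0
  · simp [hm0]
  have hmpos : 0 < (m : ℝ) := lt_of_le_of_ne (Nat.cast_nonneg m) (Ne.symm hm0)
  have hMm : 2 * (m : ℝ) < M := by linarith
  have hM0 : (0 : ℝ) < M := by linarith
  set L : ℝ := Real.log (Real.exp 1 * M / m) with hLdef
  have hL1 : 1 ≤ L := by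
    rw [hLdef, Real.le_log_iff_exp_le (by positivity)]
    rw [le_div_iff₀ hmpos]
    nlinarith [Real.exp_pos 1]
  have hmain := katona_main A Finset.univ (fun x _ y _ hxy => hsep x y hxy)
  simp only [Finset.inter_univ, Finset.card_univ] at hmain
  have hterm : ∀ B ∈ A, entE ((B.card : ℝ)) M ≤ (m : ℝ) * L := by
    intro B hBA
    set b : ℝ := (B.card : ℝ) with hbdef
    have hb0 : 0 ≤ b := Nat.cast_nonneg _
    have hbm : b ≤ m := by rw [hbdef]; exact_mod_cast hsize B hBA
    have hbM : b < M / 2 := lt_of_le_of_lt hbm hm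
    rcases eq_or_lt_of_le hb0 with h0 | hbpos
    · have he : entE b M = 0 := by rw [entE, ← h0]; simp [div_self hM0.ne']
      rw [he]
      exact mul_nonneg hmpos.le (by linarith)
    · have hMb : 0 < M - b := by linarith
      have h2nd : (M - b) * Real.log (M / (M - b)) ≤ b := by
        have hlog := Real.log_le_sub_one_of_pos (show 0 < M / (M - b) by positivity)
        calc (M - b) * Real.log (M / (M - b)) ≤ (M - b) * (M / (M - b) - 1) :=
              mul_le_mul_of_nonneg_left hlog hMb.le
          _ = b := by field_simp; ring
      have h1st : b * Real.log (M / b) + b = b * Real.log (Real.exp 1 * M / b) := by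
        rw [show Real.exp 1 * M / b = Real.exp 1 * (M / b) by ring,
          Real.log_mul (Real.exp_ne_zero 1) (by positivity), Real.log_exp]
        ring
      have hmono : b * Real.log (Real.exp 1 * M / b) ≤ (m : ℝ) * L := by
        have hsplitlog : Real.log (Real.exp 1 * M / b) = L + Real.log ((m : ℝ) / b) := by
          rw [hLdef, ← Real.log_mul (by positivity) (by positivity)]
          congr 1
          field_simp
        have hlb : Real.log ((m : ℝ) / b) ≤ (m : ℝ) / b - 1 :=
          Real.log_le_sub_one_of_pos (by positivity)
        have hbb : b * Real.log ((m : ℝ) / b) ≤ (m : ℝ) - b := by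
          calc b * Real.log ((m : ℝ) / b) ≤ b * ((m : ℝ) / b - 1) :=
                mul_le_mul_of_nonneg_left hlb hb0
            _ = (m : ℝ) - b := by field_simp
        have : (m : ℝ) - b ≤ ((m : ℝ) - b) * L := le_mul_of_one_le_right (by linarith) hL1
        calc b * Real.log (Real.exp 1 * M / b) = b * L + b * Real.log ((m : ℝ) / b) := by
              rw [hsplitlog]; ring
          _ ≤ b * L + ((m : ℝ) - b) := by linarith
          _ ≤ b * L + ((m : ℝ) - b) * L := by linarith
          _ = (m : ℝ) * L := by ring
      calc entE b M = b * Real.log (M / b) + (M - b) * Real.log (M / (M - b)) := rfl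
        _ ≤ b * Real.log (M / b) + b := by linarith
        _ = b * Real.log (Real.exp 1 * M / b) := h1st
        _ ≤ (m : ℝ) * L := hmono
  have hsum : M * Real.log M ≤ (A.card : ℝ) * ((m : ℝ) * L) := by
    calc M * Real.log M ≤ ∑ B ∈ A, entE ((B.card : ℝ)) M := hmain
      _ ≤ ∑ B ∈ A, (m : ℝ) * L := Finset.sum_le_sum hterm
      _ = (A.card : ℝ) * ((m : ℝ) * L) := by rw [Finset.sum_const, nsmul_eq_mul]
  have hLpos : 0 < L := by linarith
  have hlog2 : Real.log 2 ≠ 0 := (Real.log_pos (by norm_num)).ne'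
  have hgoal : (M / m) * Real.logb 2 M / Real.logb 2 (Real.exp 1 * M / m) =
      M * Real.log M / ((m : ℝ) * L) := by
    simp only [Real.logb, hLdef]
    field_simp
  rw [hgoal, div_le_iff₀ (by positivity)]
  linarith
end
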